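/- Let p be a prime and let (a_n)_{n≥0} be the sequence in ℚ_p given by a_n = (c_1 + c_2·n)·λ^n, where c_1, c_2, λ ∈ ℚ_p and c_2 ≠ 0, λ ≠ 0. If |c_1|_p > |c_2|_p, then the Kepler set of (a_n) is K((a_n)) = λ·(1 + c_2/c_1 + (c_2/c_1)²·ℤ_p). If |c_1|_p ≤ |c_2|_p, then K((a_n)) = {x ∈ ℚ_p : x/λ − 1 ∉ p·ℤ_p}, i.e. the complement in ℚ_p of λ·(1 + p·ℤ_p). -/

import Mathlib

section helpers

variable {p : ℕ} [Fact p.Prime]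

private lemma nat_norm_le_one' (n : ℕ) : ‖(n : ℚ_[p])‖ ≤ 1 := by
  have := Padic.norm_int_le_one (p := p) n
  simpa using this

private lemma norm_add_eq_left' {x y : ℚ_[p]} (h : ‖y‖ < ‖x‖) : ‖x + y‖ = ‖x‖ := by
  rw [Padic.add_eq_max_of_ne (ne_of_gt h)]
  exact max_eq_left h.le

private lemma exists_nat_near' (y : ℚ_[p]) (hy : ‖y‖ ≤ 1) {ε : ℝ} (hε : 0 < ε) :
    ∃ n : ℕ, ‖y - (n : ℚ_[p])‖ < ε := by
  obtain ⟨n, hn⟩ := PadicInt.denseRange_natCast.exists_dist_lt (⟨y, hy⟩ : ℤ_[p]) hε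
  refine ⟨n, ?_⟩
  erw [dist_eq_norm, PadicInt.norm_def] at hn
  exact hn

private lemma norm_le_inv_iff' (x : ℚ_[p]) : ‖x‖ ≤ (p : ℝ)⁻¹ ↔ ‖x‖ < 1 := by
  have := Padic.norm_le_pow_iff_norm_lt_pow_add_one x (-1)
  norm_num at this
  exact this

end helpers

/-- The Kepler set of a sequence `a` in `ℚ_[p]`: the closure of the set of
consecutive ratios `a (n+1) / a n` over indices `n` with `a n ≠ 0`. -/
def keplerSet (p : ℕ) [Fact p.Prime] (a : ℕ → ℚ_[p]) : Set ℚ_[p] :=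
  closure {x : ℚ_[p] | ∃ n : ℕ, a n ≠ 0 ∧ x = a (n + 1) / a n}

theorem stmt_0 (p : ℕ) [Fact p.Prime] (c₁ c₂ lam : ℚ_[p]) (hc₂ : c₂ ≠ 0) (hlam : lam ≠ 0)
    (a : ℕ → ℚ_[p]) (ha : ∀ n : ℕ, a n = (c₁ + c₂ * (n : ℚ_[p])) * lam ^ n) :
    (‖c₂‖ < ‖c₁‖ →
      keplerSet p a =
        {x : ℚ_[p] | ∃ z : ℤ_[p], x = lam * (1 + c₂ / c₁ + (c₂ / c₁) ^ 2 * (z : ℚ_[p]))}) ∧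
    (‖c₁‖ ≤ ‖c₂‖ →
      keplerSet p a = {x : ℚ_[p] | ¬ ‖x / lam - 1‖ ≤ (p : ℝ)⁻¹}) := by
  constructor
  · -- Case 1 : ‖c₂‖ < ‖c₁‖
    intro h
    have hc₁ : c₁ ≠ 0 := by
      intro h0
      rw [h0, norm_zero] at h
      exact absurd h (not_lt.mpr (norm_nonneg c₂))
    set t : ℚ_[p] := c₂ / c₁ with htdef
    have ht0 : t ≠ 0 := div_ne_zero hc₂ hc₁
    have ht : ‖t‖ < 1 := by
      rw [htdef, norm_div]
      exact (div_lt_one ((norm_nonneg c₂).trans_lt h)).mpr h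
    have hden : ∀ y : ℚ_[p], ‖y‖ ≤ 1 → ‖1 + t * y‖ = 1 := by
      intro y hy
      have h1 : ‖t * y‖ < ‖(1 : ℚ_[p])‖ := by
        rw [norm_one, norm_mul]
        calc ‖t‖ * ‖y‖ ≤ ‖t‖ * 1 := mul_le_mul_of_nonneg_left hy (norm_nonneg _)
          _ = ‖t‖ := mul_one _
          _ < 1 := ht
      simpa using norm_add_eq_left' h1
    have hdenne : ∀ y : ℚ_[p], ‖y‖ ≤ 1 → (1 + t * y) ≠ 0 := by
      intro y hy h0
      have := hden y hy
      rw [h0, norm_zero] at this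
      norm_num at this
    have hcnz : ∀ n : ℕ, c₁ + c₂ * (n : ℚ_[p]) ≠ 0 := by
      intro n
      have heq : c₁ + c₂ * (n : ℚ_[p]) = c₁ * (1 + t * n) := by
        rw [htdef]; field_simp
      rw [heq]
      exact mul_ne_zero hc₁ (hdenne _ (nat_norm_le_one' n))
    have hanz : ∀ n : ℕ, a n ≠ 0 := by
      intro n
      rw [ha]
      exact mul_ne_zero (hcnz n) (pow_ne_zero _ hlam)
    have key : ∀ n : ℕ, a (n + 1) / a n
        = lam * (1 + t + t ^ 2 * (-(n : ℚ_[p]) / (1 + t * n))) := by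
      intro n
      have h1 := hdenne _ (nat_norm_le_one' n)
      have h2 := hcnz n
      rw [ha, ha, htdef]
      rw [htdef] at h1
      push_cast
      field_simp
      ring
    apply Set.Subset.antisymm
    · apply closure_minimal
      · rintro x ⟨n, -, rfl⟩
        refine ⟨⟨-(n : ℚ_[p]) / (1 + t * n), ?_⟩, ?_⟩
        · rw [norm_div, norm_neg, hden _ (nat_norm_le_one' n), div_one]
          exact nat_norm_le_one' n
        · rw [key n]
      · have hset : {x : ℚ_[p] | ∃ z : ℤ_[p], x = lam * (1 + t + t ^ 2 * (z : ℚ_[p]))}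
            = (fun x : ℚ_[p] => (x / lam - 1 - t) / t ^ 2) ⁻¹' {y : ℚ_[p] | ‖y‖ ≤ 1} := by
          ext x
          simp only [Set.mem_setOf_eq, Set.mem_preimage]
          constructor
          · rintro ⟨z, rfl⟩
            have heq : (lam * (1 + t + t ^ 2 * (z : ℚ_[p])) / lam - 1 - t) / t ^ 2
                = (z : ℚ_[p]) := by
              field_simp
              ring
            rw [heq]
            exact z.2
          · intro hx
            refine ⟨⟨(x / lam - 1 - t) / t ^ 2, hx⟩, ?_⟩
            show x = lam * (1 + t + t ^ 2 * ((x / lam - 1 - t) / t ^ 2))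
            field_simp
            ring
        rw [hset]
        exact (isClosed_le continuous_norm continuous_const).preimage
          (by fun_prop)
    · rintro x ⟨z, rfl⟩
      unfold keplerSet
      rw [Metric.mem_closure_iff]
      intro ε hε
      have hzz : ‖(z : ℚ_[p])‖ ≤ 1 := z.2
      have h1 : (1 + t * (z : ℚ_[p])) ≠ 0 := hdenne _ hzz
      set w : ℚ_[p] := -(z : ℚ_[p]) / (1 + t * (z : ℚ_[p])) with hw
      have hwle : ‖w‖ ≤ 1 := by
        rw [hw, norm_div, norm_neg, hden _ hzz, div_one]
        exact hzz
      have h2 : (1 + t * w) ≠ 0 := hdenne _ hwle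
      have hz2 : (z : ℚ_[p]) = -w / (1 + t * w) := by
        have h1' : 1 + (z : ℚ_[p]) * t ≠ 0 := by rwa [mul_comm]
        rw [eq_div_iff h2, hw]
        field_simp
        ring
      have hC : 0 < ‖lam‖ * ‖t‖ ^ 2 :=
        mul_pos (norm_pos_iff.mpr hlam) (pow_pos (norm_pos_iff.mpr ht0) 2)
      obtain ⟨n, hn⟩ := exists_nat_near' w hwle (div_pos hε hC)
      have h3 : (1 + t * (n : ℚ_[p])) ≠ 0 := hdenne _ (nat_norm_le_one' n)
      refine ⟨a (n + 1) / a n, ⟨n, hanz n, rfl⟩, ?_⟩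
      rw [dist_eq_norm, key n]
      have heq : lam * (1 + t + t ^ 2 * (z : ℚ_[p]))
          - lam * (1 + t + t ^ 2 * (-(n : ℚ_[p]) / (1 + t * n)))
          = lam * t ^ 2 * (((n : ℚ_[p]) - w) / ((1 + t * w) * (1 + t * n))) := by
        rw [hz2]
        field_simp
        ring
      rw [heq, norm_mul, norm_mul, norm_div, norm_mul, hden _ hwle,
        hden _ (nat_norm_le_one' n), norm_pow]
      simp only [one_mul, div_one]
      rw [norm_sub_rev]
      exact (lt_div_iff₀' hC).mp hn
  · -- Case 2 : ‖c₁‖ ≤ ‖c₂‖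
    intro h
    have hb : ‖c₁ / c₂‖ ≤ 1 := by
      rw [norm_div]
      exact (div_le_one (norm_pos_iff.mpr hc₂)).mpr h
    set b : ℚ_[p] := c₁ / c₂ with hbdef
    have hRclosed : IsClosed {x : ℚ_[p] | ¬ ‖x / lam - 1‖ ≤ (p : ℝ)⁻¹} := by
      have hset : {x : ℚ_[p] | ¬ ‖x / lam - 1‖ ≤ (p : ℝ)⁻¹}
          = (fun x : ℚ_[p] => x / lam - 1) ⁻¹' {y : ℚ_[p] | 1 ≤ ‖y‖} := by
        ext x
        simp only [Set.mem_setOf_eq, Set.mem_preimage, norm_le_inv_iff', not_lt]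
      rw [hset]
      exact (isClosed_le continuous_const continuous_norm).preimage (by fun_prop)
    apply Set.Subset.antisymm
    · apply closure_minimal
      · rintro x ⟨n, hn, rfl⟩
        have hcn : c₁ + c₂ * (n : ℚ_[p]) ≠ 0 := by
          intro h0
          exact hn (by rw [ha, h0, zero_mul])
        have hr : a (n + 1) / a n / lam - 1 = c₂ / (c₁ + c₂ * (n : ℚ_[p])) := by
          rw [ha, ha]
          push_cast
          field_simp
          ring
        have hge : 1 ≤ ‖c₂ / (c₁ + c₂ * (n : ℚ_[p]))‖ := by
          rw [norm_div, le_div_iff₀ (norm_pos_iff.mpr hcn), one_mul]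
          refine le_trans (Padic.nonarchimedean _ _) (max_le h ?_)
          rw [norm_mul]
          calc ‖c₂‖ * ‖(n : ℚ_[p])‖ ≤ ‖c₂‖ * 1 :=
                mul_le_mul_of_nonneg_left (nat_norm_le_one' n) (norm_nonneg _)
            _ = ‖c₂‖ := mul_one _
        show ¬ ‖a (n + 1) / a n / lam - 1‖ ≤ (p : ℝ)⁻¹
        rw [hr, norm_le_inv_iff']
        exact not_lt.mpr hge
      · exact hRclosed
    · intro x hx
      have hu1 : 1 ≤ ‖x / lam - 1‖ := by
        by_contra hlt
        exact hx ((norm_le_inv_iff' _).mpr (not_le.mp hlt))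
      set u : ℚ_[p] := x / lam - 1 with hudef
      have hu0 : u ≠ 0 := by
        intro h0
        rw [h0, norm_zero] at hu1
        linarith
      have hv : ‖u⁻¹‖ ≤ 1 := by
        rw [norm_inv]
        exact inv_le_one_of_one_le₀ hu1
      have hv0 : 0 < ‖u⁻¹‖ := norm_pos_iff.mpr (inv_ne_zero hu0)
      set w : ℚ_[p] := u⁻¹ - b with hwdef
      have hw1 : ‖w‖ ≤ 1 := by
        rw [hwdef, sub_eq_add_neg]
        refine le_trans (Padic.nonarchimedean _ _) (max_le hv ?_)
        rw [norm_neg]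
        exact hb
      unfold keplerSet
      rw [Metric.mem_closure_iff]
      intro ε hε
      have hC : 0 < ‖lam‖ * ‖u‖ ^ 2 :=
        mul_pos (norm_pos_iff.mpr hlam) (pow_pos (norm_pos_iff.mpr hu0) 2)
      obtain ⟨n, hn⟩ := exists_nat_near' w hw1 (lt_min_iff.mpr ⟨hv0, div_pos hε hC⟩ : (0:ℝ) < min ‖u⁻¹‖ (ε / (‖lam‖ * ‖u‖ ^ 2)))
      have hbn : ‖b + (n : ℚ_[p])‖ = ‖u⁻¹‖ := by
        have heq : b + (n : ℚ_[p]) = u⁻¹ + ((n : ℚ_[p]) - w) := by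
          rw [hwdef]; ring
        rw [heq]
        apply norm_add_eq_left'
        rw [norm_sub_rev]
        exact hn.trans_le (min_le_left _ _)
      have hbn0 : b + (n : ℚ_[p]) ≠ 0 := by
        intro h0
        rw [h0, norm_zero] at hbn
        exact hv0.ne hbn
      have hcn : c₁ + c₂ * (n : ℚ_[p]) ≠ 0 := by
        have heq : c₁ + c₂ * (n : ℚ_[p]) = c₂ * (b + n) := by
          rw [hbdef]; field_simp
        rw [heq]
        exact mul_ne_zero hc₂ hbn0
      have han : a n ≠ 0 := by
        rw [ha]
        exact mul_ne_zero hcn (pow_ne_zero _ hlam)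
      refine ⟨a (n + 1) / a n, ⟨n, han, rfl⟩, ?_⟩
      rw [dist_eq_norm]
      have hbn0' : c₁ / c₂ + (n : ℚ_[p]) ≠ 0 := by rw [← hbdef]; exact hbn0
      have hr : a (n + 1) / a n = lam * (1 + 1 / (b + (n : ℚ_[p]))) := by
        rw [div_eq_iff han, ha, ha, hbdef]
        push_cast
        field_simp [hcn, hbn0', pow_succ]
        have hinv : (c₁ + c₂ * (n : ℚ_[p])) * (c₁ + c₂ * (n : ℚ_[p]))⁻¹ = 1 :=
          mul_inv_cancel₀ hcn
        ring
      have hx_eq : x = lam * (1 + u) := by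
        rw [hudef]
        field_simp
        ring
      have heq : x - a (n + 1) / a n = lam * u * (((n : ℚ_[p]) - w) / (b + n)) := by
        rw [hx_eq, hr, hwdef]
        field_simp [hu0, hbn0]
        ring
      rw [heq, norm_mul, norm_mul, norm_div, hbn, norm_inv]
      have h4 : ‖(n : ℚ_[p]) - w‖ < ε / (‖lam‖ * ‖u‖ ^ 2) := by
        rw [norm_sub_rev]
        exact hn.trans_le (min_le_right _ _)
      have hEq2 : ‖lam‖ * ‖u‖ * (‖(n : ℚ_[p]) - w‖ / ‖u‖⁻¹)
          = (‖lam‖ * ‖u‖ ^ 2) * ‖(n : ℚ_[p]) - w‖ := by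
        rw [div_eq_mul_inv, inv_inv]
        ring
      rw [hEq2]
      exact (lt_div_iff₀' hC).mp h4
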